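/- arXiv:1404.6984 — 3 statements merged into one kernel-verified Lean document; each statement's English description precedes it below -/
import Mathlib

section
/- Let $a_1, a_2 > 0$ with $a_1 + a_2 \leq 1$, and let $f : [0,\infty) \to \mathbb{R}$ be defined implicitly by $2^{-2t} = a_1 2^{-2 f(t)} + a_2$ (for $t$ such that $2^{-2t} > a_2$, i.e., $t < \frac{1}{2}\log_2(1/a_2)$). Then for $\lambda \geq 0$, $$\inf_{t \geq 0} \left( \max\{f(t),0\} - \lambda t \right) = \begin{cases} \frac{1}{2}\log_2\frac{a_1(\lambda-1)}{a_2} - \frac{\lambda}{2}\log_2\frac{\lambda-1}{a_2\lambda}, & \lambda \geq \frac{a_1+a_2}{a_1},\\ -\frac{\lambda}{2}\log_2\frac{1}{a_1+a_2}, & 0 \leq \lambda \leq \frac{a_1+a_2}{a_1}. \end{cases}$$ -/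
open MeasureTheory ProbabilityTheory Real Filter Topology

set_option maxHeartbeats 2000000 in
theorem stmt2 (a1 a2 : ℝ) (h1 : 0 < a1) (h2 : 0 < a2) (h12 : a1 + a2 ≤ 1)
    (f : ℝ → ℝ)
    (hf : ∀ t, 0 ≤ t → t < (1/2) * Real.logb 2 (1/a2) →
      (2:ℝ) ^ (-2*t) = a1 * (2:ℝ) ^ (-2 * f t) + a2)
    (lam : ℝ) (hlam : 0 ≤ lam) :
    sInf {y : ℝ | ∃ t, 0 ≤ t ∧ t < (1/2) * Real.logb 2 (1/a2) ∧
        y = max (f t) 0 - lam * t} =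
      if (a1 + a2)/a1 ≤ lam then
        (1/2) * Real.logb 2 (a1*(lam-1)/a2) - (lam/2) * Real.logb 2 ((lam-1)/(a2*lam))
      else -(lam/2) * Real.logb 2 (1/(a1+a2)) := by
  have h2' : a2 ≠ 0 := ne_of_gt h2
  have h1' : a1 ≠ 0 := ne_of_gt h1
  have hl2 : (0:ℝ) < Real.log 2 := Real.log_pos one_lt_two
  have hl2' : Real.log 2 ≠ 0 := ne_of_gt hl2
  set T : ℝ := (1/2) * Real.logb 2 (1/a2) with hTdef
  have hlogb_inv : Real.logb 2 (1/a2) = - Real.logb 2 a2 := by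
    rw [one_div, Real.logb_inv]
  have hxpos : ∀ t : ℝ, (0:ℝ) < (2:ℝ) ^ (-2*t) := fun t => Real.rpow_pos_of_pos two_pos _
  have hdomf : ∀ t : ℝ, t < T → a2 < (2:ℝ)^(-2*t) := by
    intro t ht
    have h : Real.logb 2 a2 < -2*t := by
      rw [hTdef, hlogb_inv] at ht
      linarith
    calc a2 = (2:ℝ) ^ (Real.logb 2 a2) := (Real.rpow_logb two_pos (by norm_num) h2).symm
    _ < (2:ℝ)^(-2*t) := (Real.rpow_lt_rpow_left_iff one_lt_two).2 h
  have hdomr : ∀ t : ℝ, a2 < (2:ℝ)^(-2*t) → t < T := by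
    intro t h
    have h' : Real.logb 2 a2 < -2*t := by
      have := Real.logb_lt_logb (b := 2) one_lt_two h2 h
      rwa [Real.logb_rpow two_pos (by norm_num)] at this
    rw [hTdef, hlogb_inv]
    linarith
  have hfu : ∀ t, 0 ≤ t → t < T → (2:ℝ)^(-2 * f t) = ((2:ℝ)^(-2*t) - a2)/a1 := by
    intro t ht ht'
    have h := hf t ht ht'
    rw [eq_div_iff h1']
    linarith
  rcases le_or_gt ((a1 + a2)/a1) lam with hcase | hcase
  · rw [if_pos hcase]
    set V := (1/2) * Real.logb 2 (a1*(lam-1)/a2) - (lam/2) * Real.logb 2 ((lam-1)/(a2*lam)) with hVdef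
    have hAL : a1 + a2 ≤ a1 * lam := by
      rw [div_le_iff₀ h1] at hcase; linarith
    have hlam1 : 1 < lam := by nlinarith
    have hl1' : 0 < lam - 1 := by linarith
    have hlamp : 0 < lam := by linarith
    have hBpos : 0 < (lam-1)/(a2*lam) := div_pos hl1' (by positivity)
    have hApos : 0 < a1*(lam-1)/a2 := by positivity
    have hge1 : 1 ≤ (lam-1)/(a2*lam) := by
      rw [le_div_iff₀ (by positivity)]
      nlinarith [mul_le_mul_of_nonneg_right hAL (by linarith : (0:ℝ) ≤ 1 - a2),
        mul_nonneg h2.le (by linarith : (0:ℝ) ≤ 1 - (a1+a2))]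
    set t' := (1/2) * Real.logb 2 ((lam-1)/(a2*lam)) with ht'def
    have ht'0 : 0 ≤ t' := mul_nonneg (by norm_num) (Real.logb_nonneg one_lt_two hge1)
    have hx' : (2:ℝ)^(-2*t') = a2*lam/(lam-1) := by
      have e : -2*t' = Real.logb 2 (a2*lam/(lam-1)) := by
        rw [ht'def, show a2*lam/(lam-1) = ((lam-1)/(a2*lam))⁻¹ from by rw [inv_div]]
        rw [Real.logb_inv]; ring
      rw [e, Real.rpow_logb two_pos (by norm_num) (by positivity)]
    have ht'T : t' < T := hdomr t' (by rw [hx', lt_div_iff₀ hl1']; nlinarith)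
    have hu' : (2:ℝ)^(-2 * f t') = a2/(a1*(lam-1)) := by
      rw [hfu t' ht'0 ht'T, hx']
      field_simp
      ring
    have hft' : f t' = (1/2) * Real.logb 2 (a1*(lam-1)/a2) := by
      have h := congrArg (Real.logb 2) hu'
      rw [Real.logb_rpow two_pos (by norm_num)] at h
      rw [show a2/(a1*(lam-1)) = (a1*(lam-1)/a2)⁻¹ from by rw [inv_div], Real.logb_inv] at h
      linarith
    have hft'0 : 0 ≤ f t' := by
      rw [hft']
      refine mul_nonneg (by norm_num) (Real.logb_nonneg one_lt_two ?_)
      rw [le_div_iff₀ h2]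
      nlinarith
    have hmem : ∃ t, 0 ≤ t ∧ t < T ∧ V = max (f t) 0 - lam * t := by
      refine ⟨t', ht'0, ht'T, ?_⟩
      rw [max_eq_left hft'0, hft', ht'def, hVdef]
      ring
    have hlb : ∀ y, (∃ t, 0 ≤ t ∧ t < T ∧ y = max (f t) 0 - lam * t) → V ≤ y := by
      rintro y ⟨t, ht0, htT, rfl⟩
      have hxgt : a2 < (2:ℝ)^(-2*t) := hdomf t htT
      have hx0 : (0:ℝ) < (2:ℝ)^(-2*t) := hxpos t
      set x := (2:ℝ)^(-2*t) with hxdef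
      have hu := hfu t ht0 htT
      have hupos : (0:ℝ) < (x - a2)/a1 := div_pos (by linarith) h1
      have hlogu : (-2 * f t) * Real.log 2 = Real.log ((x-a2)/a1) := by
        rw [← hu, Real.log_rpow two_pos]
      have hlogx : (-2 * t) * Real.log 2 = Real.log x := by
        rw [hxdef, Real.log_rpow two_pos]
      have hxB : 0 < x * ((lam-1)/(a2*lam)) := mul_pos hx0 hBpos
      have hkey : (a1*(lam-1)/a2) * ((x-a2)/a1) ≤ (x * ((lam-1)/(a2*lam))) ^ lam := by
        have hb := one_add_mul_self_le_rpow_one_add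
          (s := x * ((lam-1)/(a2*lam)) - 1) (by linarith) hlam1.le
        rw [show (1 : ℝ) + (x * ((lam-1)/(a2*lam)) - 1) = x * ((lam-1)/(a2*lam)) from by ring] at hb
        refine le_trans (le_of_eq ?_) hb
        field_simp
        ring
      have hlogkey := Real.log_le_log (by positivity) hkey
      rw [Real.log_rpow hxB, Real.log_mul (ne_of_gt hApos) (ne_of_gt hupos),
        Real.log_mul (ne_of_gt hx0) (ne_of_gt hBpos)] at hlogkey
      have hmul : lam * Real.log x = lam * ((-2*t) * Real.log 2) := by rw [hlogx]
      have hVeq : V = (Real.log (a1*(lam-1)/a2) - lam * Real.log ((lam-1)/(a2*lam))) / (2*Real.log 2) := by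
        rw [hVdef]
        simp only [Real.logb]
        field_simp
      have h5 : V ≤ f t - lam * t := by
        rw [hVeq, div_le_iff₀ (by positivity)]
        linarith [hlogkey, hlogu, hmul]
      calc V ≤ f t - lam * t := h5
        _ ≤ max (f t) 0 - lam * t := by
          have := le_max_left (f t) 0; linarith
    exact le_antisymm (csInf_le ⟨V, fun y hy => hlb y hy⟩ hmem) (le_csInf ⟨V, hmem⟩ hlb)
  · rw [if_neg (not_le.mpr hcase)]
    have hsum : 0 < a1 + a2 := by linarith
    set W := -(lam/2) * Real.logb 2 (1/(a1+a2)) with hWdef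
    set t0 := (1/2) * Real.logb 2 (1/(a1+a2)) with ht0def
    have hlogb_inv0 : Real.logb 2 (1/(a1+a2)) = - Real.logb 2 (a1+a2) := by
      rw [one_div, Real.logb_inv]
    have ht00 : 0 ≤ t0 := by
      rw [ht0def]
      refine mul_nonneg (by norm_num) (Real.logb_nonneg one_lt_two ?_)
      rw [le_div_iff₀ hsum]; linarith
    have hx0eq : (2:ℝ)^(-2*t0) = a1 + a2 := by
      have e : -2*t0 = Real.logb 2 (a1+a2) := by
        rw [ht0def, hlogb_inv0]; ring
      rw [e, Real.rpow_logb two_pos (by norm_num) hsum]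
    have ht0T : t0 < T := hdomr t0 (by rw [hx0eq]; linarith)
    have hft0 : f t0 = 0 := by
      have h := hfu t0 ht00 ht0T
      rw [hx0eq] at h
      have h' : (2:ℝ)^(-2*f t0) = 1 := by rw [h]; field_simp; ring
      have hh := congrArg Real.log h'
      rw [Real.log_rpow two_pos, Real.log_one] at hh
      rcases mul_eq_zero.mp hh with h'' | h''
      · linarith
      · exact absurd h'' hl2'
    have hWt0 : W = -lam * t0 := by rw [hWdef, ht0def]; ring
    have hmem : ∃ t, 0 ≤ t ∧ t < T ∧ W = max (f t) 0 - lam * t := by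
      refine ⟨t0, ht00, ht0T, ?_⟩
      rw [hft0, max_self, hWdef, ht0def]; ring
    have hlb : ∀ y, (∃ t, 0 ≤ t ∧ t < T ∧ y = max (f t) 0 - lam * t) → W ≤ y := by
      rintro y ⟨t, ht0', htT, rfl⟩
      have hxgt : a2 < (2:ℝ)^(-2*t) := hdomf t htT
      have hx0 : (0:ℝ) < (2:ℝ)^(-2*t) := hxpos t
      set x := (2:ℝ)^(-2*t) with hxdef
      have hu := hfu t ht0' htT
      have hupos : (0:ℝ) < (x - a2)/a1 := div_pos (by linarith) h1
      have hlogu : (-2 * f t) * Real.log 2 = Real.log ((x-a2)/a1) := by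
        rw [← hu, Real.log_rpow two_pos]
      have hlogx : (-2 * t) * Real.log 2 = Real.log x := by
        rw [hxdef, Real.log_rpow two_pos]
      have hlx0 : (-2*t0) * Real.log 2 = Real.log (a1+a2) := by
        rw [← hx0eq, Real.log_rpow two_pos]
      rcases le_or_gt (f t) 0 with hft | hft
      · rw [max_eq_right hft]
        have hxge : a1 + a2 ≤ x := by
          have h1le : (1:ℝ) ≤ (2:ℝ)^(-2 * f t) := by
            rw [show (1:ℝ) = (2:ℝ)^(0:ℝ) from (Real.rpow_zero 2).symm]
            exact Real.rpow_le_rpow_of_exponent_le one_le_two (by linarith)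
          rw [hu, le_div_iff₀ h1] at h1le
          linarith
        have htle : t ≤ t0 := by
          have hle := Real.log_le_log hsum hxge
          rw [← hlogx, ← hlx0] at hle
          nlinarith
        rw [hWt0]
        have := mul_le_mul_of_nonneg_left htle hlam
        linarith
      · rw [max_eq_left hft.le]
        have hxle : x ≤ a1 + a2 := by
          have hle1 : (2:ℝ)^(-2 * f t) ≤ 1 :=
            Real.rpow_le_one_of_one_le_of_nonpos one_le_two (by linarith)
          rw [hu, div_le_one h1] at hle1
          linarith
        have hxdiv : 0 < x / (a1+a2) := div_pos hx0 hsum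
        have hla : lam * a1 < a1 + a2 := (lt_div_iff₀ h1).mp hcase
        have hkey : (x - a2)/a1 ≤ (x/(a1+a2)) ^ lam := by
          rcases le_or_gt 1 lam with hlam1 | hlam1
          · have hb := one_add_mul_self_le_rpow_one_add (s := x/(a1+a2) - 1) (by linarith) hlam1
            rw [show (1:ℝ) + (x/(a1+a2) - 1) = x/(a1+a2) from by ring] at hb
            refine le_trans ?_ hb
            rw [← sub_nonneg]
            have e : (1 + lam * (x / (a1 + a2) - 1)) - (x - a2)/a1 =
                (((a1+a2) - x) * ((a1+a2) - lam*a1)) / ((a1+a2) * a1) := by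
              field_simp; ring
            rw [e]
            exact div_nonneg (mul_nonneg (by linarith) (by linarith)) (by positivity)
          · have hb : (x/(a1+a2)) ^ (1:ℝ) ≤ (x/(a1+a2)) ^ lam :=
              Real.rpow_le_rpow_of_exponent_ge hxdiv (by rw [div_le_one hsum]; exact hxle) hlam1.le
            rw [Real.rpow_one] at hb
            refine le_trans ?_ hb
            rw [div_le_div_iff₀ h1 hsum]
            nlinarith [mul_le_mul_of_nonneg_left hxle h2.le]
        have hlogkey := Real.log_le_log hupos hkey
        rw [Real.log_rpow hxdiv, Real.log_div (ne_of_gt hx0) (ne_of_gt hsum)] at hlogkey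
        rw [← hlogu, ← hlogx, ← hlx0] at hlogkey
        rw [hWt0]
        nlinarith [hlogkey, hl2]
    exact le_antisymm (csInf_le ⟨W, fun y hy => hlb y hy⟩ hmem) (le_csInf ⟨W, hmem⟩ hlb)
end

section
/- Let $a_1, a_2 > 0$ with $a_1 + a_2 \le 1$, and suppose a nonnegative real number $u$ and real number $t \ge 0$ satisfy $2^{-2t} \geq a_1 2^{-2u} + a_2$. Then for every $\lambda \geq \frac{a_1+a_2}{a_1}$, $$u - \lambda t \geq \frac{1}{2}\log_2\frac{a_1(\lambda-1)}{a_2} - \frac{\lambda}{2}\log_2\frac{\lambda-1}{a_2\lambda}.$$ -/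
open MeasureTheory ProbabilityTheory Real Filter Topology

theorem stmt3 (a1 a2 : ℝ) (h1 : 0 < a1) (h2 : 0 < a2) (h12 : a1 + a2 ≤ 1)
    (u t : ℝ) (hu : 0 ≤ u) (ht : 0 ≤ t)
    (h : (2:ℝ) ^ (-2*t) ≥ a1 * (2:ℝ) ^ (-2*u) + a2)
    (lam : ℝ) (hlam : (a1+a2)/a1 ≤ lam) :
    u - lam * t ≥
      (1/2) * Real.logb 2 (a1*(lam-1)/a2)
        - (lam/2) * Real.logb 2 ((lam-1)/(a2*lam)) := by
  have hL : (0:ℝ) < Real.log 2 := Real.log_pos (by norm_num)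
  have hlam1 : 1 < lam := by
    refine lt_of_lt_of_le ?_ hlam
    rw [lt_div_iff₀ h1]; linarith
  have hlam0 : (0:ℝ) < lam := by linarith
  have hlm1 : (0:ℝ) < lam - 1 := by linarith
  set x : ℝ := (2:ℝ) ^ (-2*u) with hxdef
  set y : ℝ := (2:ℝ) ^ (-2*t) with hydef
  have hx : 0 < x := Real.rpow_pos_of_pos (by norm_num) _
  have hy : 0 < y := Real.rpow_pos_of_pos (by norm_num) _
  have hlogx : Real.log x = (-2*u) * Real.log 2 := Real.log_rpow (by norm_num) _
  have hlogy : Real.log y = (-2*t) * Real.log 2 := Real.log_rpow (by norm_num) _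
  set A : ℝ := a1*x + a2 with hAdef
  have hA : 0 < A := by positivity
  set xs : ℝ := a2/(a1*(lam-1)) with hxsdef
  have hxs : 0 < xs := by positivity
  set s : ℝ := x/xs with hsdef
  have hs : 0 < s := by positivity
  set r : ℝ := s ^ (1/lam) with hrdef
  have hr : 0 < r := Real.rpow_pos_of_pos hs _
  have hrlam : r ^ lam = s := by
    rw [hrdef, ← Real.rpow_mul hs.le, one_div_mul_cancel hlam0.ne', Real.rpow_one]
  -- Bernoulli
  have hB : 1 + lam * (r - 1) ≤ s := by
    have := one_add_mul_self_le_rpow_one_add (show (-1:ℝ) ≤ r - 1 by linarith) hlam1.le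
    rwa [show (1:ℝ) + (r-1) = r by ring, hrlam] at this
  have hsl : 0 < s + lam - 1 := by linarith
  have hrle : r ≤ (s + lam - 1)/lam := by
    rw [le_div_iff₀ hlam0]; nlinarith
  have hlogr : Real.log r = (1/lam) * Real.log s := Real.log_rpow hs _
  have hkey : Real.log s ≤ lam * Real.log ((s + lam - 1)/lam) := by
    have h1' : Real.log r ≤ Real.log ((s + lam - 1)/lam) := Real.log_le_log hr hrle
    rw [hlogr] at h1'
    calc Real.log s = lam * ((1/lam) * Real.log s) := by field_simp
    _ ≤ lam * Real.log ((s + lam - 1)/lam) := by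
        exact mul_le_mul_of_nonneg_left h1' hlam0.le
  -- rewrite (s+lam-1)/lam as A/As
  set As : ℝ := a2*lam/(lam-1) with hAsdef
  have hAs : 0 < As := by positivity
  have heq : (s + lam - 1)/lam = A/As := by
    rw [hsdef, hxsdef, hAdef, hAsdef]
    field_simp
    ring
  -- expand logs
  have hlogs : Real.log s = Real.log x - Real.log xs := Real.log_div hx.ne' hxs.ne'
  have hlogAAs : Real.log (A/As) = Real.log A - Real.log As := Real.log_div hA.ne' hAs.ne'
  have hlogxs : Real.log xs = Real.log a2 - (Real.log a1 + Real.log (lam-1)) := by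
    rw [hxsdef, Real.log_div h2.ne' (by positivity), Real.log_mul h1.ne' hlm1.ne']
  have hlogAs : Real.log As = Real.log a2 + Real.log lam - Real.log (lam-1) := by
    rw [hAsdef, Real.log_div (by positivity) hlm1.ne', Real.log_mul h2.ne' hlam0.ne']
  have hlogC1 : Real.log (a1*(lam-1)/a2) =
      Real.log a1 + Real.log (lam-1) - Real.log a2 := by
    rw [Real.log_div (by positivity) h2.ne', Real.log_mul h1.ne' hlm1.ne']
  have hlogC2 : Real.log ((lam-1)/(a2*lam)) =
      Real.log (lam-1) - (Real.log a2 + Real.log lam) := by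
    rw [Real.log_div hlm1.ne' (by positivity), Real.log_mul h2.ne' hlam0.ne']
  -- monotonicity in y
  have hyA : Real.log A ≤ Real.log y := Real.log_le_log hA h
  -- key inequality in log form
  have hmain : -Real.log x + lam * Real.log y ≥
      Real.log (a1*(lam-1)/a2) - lam * Real.log ((lam-1)/(a2*lam)) := by
    rw [heq, hlogAAs, hlogs] at hkey
    have h2' : lam * Real.log A ≤ lam * Real.log y :=
      mul_le_mul_of_nonneg_left hyA hlam0.le
    rw [hlogC1, hlogC2]
    have e1 : lam * Real.log As = lam*Real.log a2 + lam*Real.log lam - lam*Real.log (lam-1) := by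
      rw [hlogAs]; ring
    linarith [hkey, h2', hlogxs, e1]
  -- conclude
  rw [ge_iff_le, ← sub_nonneg]
  have hexpr : u - lam * t -
      ((1/2) * Real.logb 2 (a1*(lam-1)/a2) - (lam/2) * Real.logb 2 ((lam-1)/(a2*lam)))
      = ((-Real.log x + lam * Real.log y) -
        (Real.log (a1*(lam-1)/a2) - lam * Real.log ((lam-1)/(a2*lam)))) / (2 * Real.log 2) := by
    rw [Real.logb, Real.logb, hlogx, hlogy]
    field_simp
    ring
  rw [hexpr]
  apply div_nonneg (by linarith [hmain]) (by positivity)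
end

section
/- Let $\Sigma_X, \Sigma_Z$ be $n \times n$ positive definite matrices and $\lambda \geq 1 + |\Sigma_X^{-1}\Sigma_Z|^{1/n}$. Suppose nonnegative reals $u, t$ satisfy $2^{-2t/n} \geq \frac{|\Sigma_X|^{1/n}}{|\Sigma_X+\Sigma_Z|^{1/n}} 2^{-2u/n} + \frac{|\Sigma_Z|^{1/n}}{|\Sigma_X+\Sigma_Z|^{1/n}}$. Then $$u - \lambda t \geq \frac{n}{2}\left[\log_2\frac{|\Sigma_X|^{1/n}(\lambda-1)}{|\Sigma_Z|^{1/n}} - \lambda \log_2 \frac{|\Sigma_X+\Sigma_Z|^{1/n}(\lambda-1)}{|\Sigma_Z|^{1/n}\lambda}\right].$$ Moreover, the hypothesis $a_1 + a_2 \leq 1$ needed for this bound, with $a_1 = \frac{|\Sigma_X|^{1/n}}{|\Sigma_X+\Sigma_Z|^{1/n}}$ and $a_2 = \frac{|\Sigma_Z|^{1/n}}{|\Sigma_X+\Sigma_Z|^{1/n}}$, holds by the Minkowski determinant inequality $|\Sigma_X|^{1/n} + |\Sigma_Z|^{1/n} \leq |\Sigma_X+\Sigma_Z|^{1/n}$.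 -/
open MeasureTheory ProbabilityTheory Real Filter Topology
open Matrix


lemma amgm_one_add (n : ℕ) (hn : 0 < n) (μ : Fin n → ℝ) (hμ : ∀ i, 0 < μ i) :
    1 + (∏ i, μ i) ^ ((1:ℝ)/n) ≤ (∏ i, (1 + μ i)) ^ ((1:ℝ)/n) := by
  have h1 : ∀ i, (0:ℝ) < 1 + μ i := fun i => by linarith [hμ i]
  have hQ0 : (0:ℝ) < ∏ i, (1 + μ i) := Finset.prod_pos (fun i _ => h1 i)
  have hQpos : 0 < (∏ i, (1 + μ i)) ^ ((1:ℝ)/n) := Real.rpow_pos_of_pos hQ0 _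
  have hn' : ((n:ℝ)) ≠ 0 := Nat.cast_ne_zero.mpr hn.ne'
  have hw : ∑ _i : Fin n, (1:ℝ)/n = 1 := by
    simp [Finset.sum_const, Finset.card_univ]
    field_simp
  have g1 := Real.geom_mean_le_arith_mean_weighted Finset.univ (fun _ => (1:ℝ)/n)
      (fun i => (1 + μ i)⁻¹) (fun i _ => by positivity) hw (fun i _ => inv_nonneg.mpr (h1 i).le)
  have g2 := Real.geom_mean_le_arith_mean_weighted Finset.univ (fun _ => (1:ℝ)/n)
      (fun i => μ i / (1 + μ i)) (fun i _ => by positivity) hw (fun i _ => div_nonneg (hμ i).le (h1 i).le)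
  have hp1 : (∏ i, ((1 + μ i)⁻¹) ^ ((1:ℝ)/n)) = ((∏ i, (1 + μ i)) ^ ((1:ℝ)/n))⁻¹ := by
    rw [Real.finset_prod_rpow _ _ (fun i _ => inv_nonneg.mpr (h1 i).le), Finset.prod_inv_distrib,
      Real.inv_rpow hQ0.le]
  have hp2 : (∏ i, (μ i / (1 + μ i)) ^ ((1:ℝ)/n))
      = (∏ i, μ i) ^ ((1:ℝ)/n) / (∏ i, (1 + μ i)) ^ ((1:ℝ)/n) := by
    rw [Real.finset_prod_rpow _ _ (fun i _ => div_nonneg (hμ i).le (h1 i).le), Finset.prod_div_distrib,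
      Real.div_rpow (Finset.prod_nonneg (fun i _ => (hμ i).le)) hQ0.le]
  have hsum : (∑ i, (1:ℝ)/n * (1 + μ i)⁻¹) + ∑ i, (1:ℝ)/n * (μ i / (1 + μ i)) = 1 := by
    rw [← Finset.sum_add_distrib]
    have : ∀ i ∈ Finset.univ, (1:ℝ)/n * (1 + μ i)⁻¹ + (1:ℝ)/n * (μ i / (1 + μ i)) = 1/n := by
      intro i _
      have := (h1 i).ne'
      field_simp
    rw [Finset.sum_congr rfl this]
    simp [Finset.sum_const, Finset.card_univ]
    field_simp
  have heq : ((∏ i, (1 + μ i)) ^ ((1:ℝ)/n))⁻¹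
      + (∏ i, μ i) ^ ((1:ℝ)/n) / (∏ i, (1 + μ i)) ^ ((1:ℝ)/n) ≤ 1 := by
    rw [← hp1, ← hp2]
    calc _ ≤ (∑ i, (1:ℝ)/n * (1 + μ i)⁻¹) + ∑ i, (1:ℝ)/n * (μ i / (1 + μ i)) :=
          add_le_add g1 g2
      _ = 1 := hsum
  have := mul_le_mul_of_nonneg_right heq hQpos.le
  rw [add_mul, inv_mul_cancel₀ hQpos.ne', div_mul_cancel₀ _ hQpos.ne', one_mul] at this
  linarith

lemma bern_log {r lam : ℝ} (hr : 0 < r) (hlam : 1 < lam) :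
    Real.log r ≤ lam * (Real.log (r + lam - 1) - Real.log lam) := by
  have hlam0 : 0 < lam := by linarith
  set c := r ^ ((1:ℝ)/lam) with hc
  have hc0 : 0 < c := Real.rpow_pos_of_pos hr _
  have hclam : c ^ lam = r := by
    rw [hc, ← Real.rpow_mul hr.le, one_div, inv_mul_cancel₀ hlam0.ne', Real.rpow_one]
  have bern := one_add_mul_self_le_rpow_one_add (s := c - 1) (by linarith) hlam.le
  have h1c : (1 : ℝ) + (c - 1) = c := by ring
  rw [h1c, hclam] at bern
  have hlc : lam * c ≤ r + lam - 1 := by nlinarith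
  have hlog : Real.log (lam * c) ≤ Real.log (r + lam - 1) := by
    apply Real.log_le_log (by positivity) hlc
  rw [Real.log_mul hlam0.ne' hc0.ne'] at hlog
  have hlogc : Real.log c = 1/lam * Real.log r := Real.log_rpow hr _
  calc Real.log r = lam * (1/lam * Real.log r) := by field_simp
    _ ≤ lam * (Real.log (r + lam - 1) - Real.log lam) := by
        apply mul_le_mul_of_nonneg_left (by linarith) hlam0.le
lemma key_log {a1 a2 lam x : ℝ} (h1 : 0 < a1) (h2 : 0 < a2) (hl : 1 < lam) (hx : 0 < x) :
    Real.log (a1 * (lam - 1) / a2) + lam * Real.log (a2 * lam / (lam - 1))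
      ≤ lam * Real.log (a1 * x + a2) - Real.log x := by
  have hm : (0:ℝ) < lam - 1 := by linarith
  have hl0 : (0:ℝ) < lam := by linarith
  set r := x * (a1 * (lam - 1) / a2) with hrdef
  have hr : 0 < r := by positivity
  have hb := bern_log hr hl
  have hs : 0 < a1 * x + a2 := by positivity
  have hrl : 0 < r + lam - 1 := by nlinarith
  have hkey : a1 * x + a2 = a2 * (r + lam - 1) / (lam - 1) := by
    rw [hrdef]; field_simp; ring
  have e1 : Real.log r = Real.log x + Real.log a1 + Real.log (lam - 1) - Real.log a2 := by
    rw [hrdef, Real.log_mul hx.ne' (by positivity), Real.log_div (by positivity) h2.ne',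
      Real.log_mul h1.ne' hm.ne']
    ring
  have e2 : Real.log (a1 * x + a2)
      = Real.log a2 + Real.log (r + lam - 1) - Real.log (lam - 1) := by
    rw [hkey, Real.log_div (by positivity) hm.ne', Real.log_mul h2.ne' hrl.ne']
  have e3 : Real.log (a1 * (lam - 1) / a2)
      = Real.log a1 + Real.log (lam - 1) - Real.log a2 := by
    rw [Real.log_div (by positivity) h2.ne', Real.log_mul h1.ne' hm.ne']
  have e4 : Real.log (a2 * lam / (lam - 1))
      = Real.log a2 + Real.log lam - Real.log (lam - 1) := by
    rw [Real.log_div (by positivity) hm.ne', Real.log_mul h2.ne' hl0.ne']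
  rw [e3, e4, e2]
  nlinarith [hb, e1]

lemma posdef_conj {n : ℕ} {A : Matrix (Fin n) (Fin n) ℝ} (hA : A.PosDef)
    {B : Matrix (Fin n) (Fin n) ℝ} (hB : IsUnit B.det) : (Bᴴ * A * B).PosDef := by
  refine Matrix.PosDef.of_dotProduct_mulVec_pos (Matrix.isHermitian_conjTranspose_mul_mul B hA.1) fun x hx => ?_
  have hBx : B *ᵥ x ≠ 0 := by
    intro h
    apply hx
    have hinj := Matrix.mulVec_injective_iff_isUnit.mpr ((Matrix.isUnit_iff_isUnit_det B).mpr hB)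
    exact hinj (by simpa using h)
  simpa only [Matrix.star_mulVec, Matrix.dotProduct_mulVec, Matrix.vecMul_vecMul]
    using hA.dotProduct_mulVec_pos hBx

lemma det_one_add_spectral {n : ℕ} {M : Matrix (Fin n) (Fin n) ℝ} (hM : M.IsHermitian) :
    (1 + M).det = ∏ i, (1 + hM.eigenvalues i) := by
  set U : Matrix (Fin n) (Fin n) ℝ := (hM.eigenvectorUnitary : Matrix (Fin n) (Fin n) ℝ) with hU
  have hUmem : U ∈ Matrix.unitaryGroup (Fin n) ℝ := hM.eigenvectorUnitary.2
  have hUU : U * star U = 1 := (Matrix.mem_unitaryGroup_iff).mp hUmem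
  have hspec : M = U * Matrix.diagonal (RCLike.ofReal ∘ hM.eigenvalues) * star U :=
    hM.spectral_theorem
  have h1 : (1 : Matrix (Fin n) (Fin n) ℝ) + M
      = U * (1 + Matrix.diagonal (RCLike.ofReal ∘ hM.eigenvalues)) * star U := by
    rw [Matrix.mul_add, Matrix.add_mul, Matrix.mul_one, hUU, ← hspec]
  rw [h1, Matrix.det_mul, Matrix.det_mul]
  have : U.det * ((1 : Matrix (Fin n) (Fin n) ℝ) + Matrix.diagonal (RCLike.ofReal ∘ hM.eigenvalues)).det * (star U).det
      = ((1 : Matrix (Fin n) (Fin n) ℝ) + Matrix.diagonal (RCLike.ofReal ∘ hM.eigenvalues)).det * (U * star U).det := by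
    rw [Matrix.det_mul]; ring
  rw [this, hUU, Matrix.det_one, mul_one]
  have hd : (1 : Matrix (Fin n) (Fin n) ℝ) + Matrix.diagonal (RCLike.ofReal ∘ hM.eigenvalues)
      = Matrix.diagonal (fun i => 1 + hM.eigenvalues i) := by
    rw [← Matrix.diagonal_one, Matrix.diagonal_add]
    congr 1
  rw [hd, Matrix.det_diagonal]
open scoped MatrixOrder in
lemma minkowski_det {n : ℕ} (hn : 0 < n) {A B : Matrix (Fin n) (Fin n) ℝ}
    (hA : A.PosDef) (hB : B.PosDef) :
    A.det ^ ((1:ℝ)/n) + B.det ^ ((1:ℝ)/n) ≤ (A + B).det ^ ((1:ℝ)/n) := by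
  classical
  set C := CFC.sqrt A with hCdef
  have hCherm : C.IsHermitian := (CFC.sqrt_nonneg A).posSemidef.1
  have hCC : C * C = A := CFC.sqrt_mul_sqrt_self A hA.posSemidef.nonneg
  have hdetA : C.det * C.det = A.det := by rw [← Matrix.det_mul, hCC]
  have hdetApos : 0 < A.det := hA.det_pos
  have hCdet : IsUnit C.det := by
    have : C.det ≠ 0 := fun h => hdetApos.ne (by rw [← hdetA, h, zero_mul])
    exact this.isUnit
  have hCinvdet : IsUnit C⁻¹.det :=
    IsUnit.of_mul_eq_one _ (C.det_nonsing_inv_mul_det hCdet)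
  set M := C⁻¹ * B * C⁻¹ with hMdef
  have hMpos : M.PosDef := by
    have h := posdef_conj hB hCinvdet
    rwa [Matrix.conjTranspose_nonsing_inv, hCherm.eq] at h
  have hdetM : A.det * M.det = B.det := by
    rw [hMdef, Matrix.det_mul, Matrix.det_mul, ← hdetA]
    have h1 : C⁻¹.det * C.det = 1 := C.det_nonsing_inv_mul_det hCdet
    calc C.det * C.det * (C⁻¹.det * B.det * C⁻¹.det)
        = (C⁻¹.det * C.det) * (C⁻¹.det * C.det) * B.det := by ring
      _ = B.det := by rw [h1]; ring
  have hAB : A + B = C * (1 + M) * C := by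
    rw [Matrix.mul_add, Matrix.add_mul, Matrix.mul_one, hCC, hMdef]
    congr 1
    rw [← Matrix.mul_assoc, ← Matrix.mul_assoc, Matrix.mul_nonsing_inv _ hCdet,
      Matrix.one_mul, Matrix.mul_assoc, Matrix.nonsing_inv_mul _ hCdet, Matrix.mul_one]
  have hdetAB : (A + B).det = A.det * (1 + M).det := by
    rw [hAB, Matrix.det_mul, Matrix.det_mul, ← hdetA]; ring
  set e := hMpos.1.eigenvalues with hedef
  have hepos : ∀ i, 0 < e i := fun i => hMpos.eigenvalues_pos i
  have hprodM : M.det = ∏ i, e i := by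
    have := hMpos.1.det_eq_prod_eigenvalues
    simpa using this
  have hprod1 : (1 + M).det = ∏ i, (1 + e i) := det_one_add_spectral hMpos.1
  have hMdetpos : 0 < M.det := hMpos.det_pos
  have key := amgm_one_add n hn e hepos
  have h1 : (A + B).det ^ ((1:ℝ)/n) = A.det ^ ((1:ℝ)/n) * (∏ i, (1 + e i)) ^ ((1:ℝ)/n) := by
    rw [hdetAB, hprod1, Real.mul_rpow hdetApos.le (Finset.prod_nonneg fun i _ =>
      (by linarith [hepos i] : (0:ℝ) ≤ 1 + e i))]
  have h2 : A.det ^ ((1:ℝ)/n) * (∏ i, e i) ^ ((1:ℝ)/n) = B.det ^ ((1:ℝ)/n) := by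
    rw [← Real.mul_rpow hdetApos.le (Finset.prod_nonneg fun i _ => (hepos i).le),
      ← hprodM, hdetM]
  have hApos : 0 < A.det ^ ((1:ℝ)/n) := Real.rpow_pos_of_pos hdetApos _
  calc A.det ^ ((1:ℝ)/n) + B.det ^ ((1:ℝ)/n)
      = A.det ^ ((1:ℝ)/n) * (1 + (∏ i, e i) ^ ((1:ℝ)/n)) := by rw [mul_add, mul_one, h2]
    _ ≤ A.det ^ ((1:ℝ)/n) * (∏ i, (1 + e i)) ^ ((1:ℝ)/n) :=
        mul_le_mul_of_nonneg_left key hApos.le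
    _ = (A + B).det ^ ((1:ℝ)/n) := h1.symm
theorem stmt19 (n : ℕ) (hn : 0 < n) (SX SZ : Matrix (Fin n) (Fin n) ℝ)
    (hX : SX.PosDef) (hZ : SZ.PosDef) (lam : ℝ)
    (hlam : 1 + (SX⁻¹ * SZ).det ^ ((1:ℝ)/n) ≤ lam)
    (u t : ℝ) (hu : 0 ≤ u) (ht : 0 ≤ t)
    (h : (2:ℝ) ^ (-(2:ℝ)*t/n) ≥
        SX.det ^ ((1:ℝ)/n) / (SX+SZ).det ^ ((1:ℝ)/n) * (2:ℝ) ^ (-(2:ℝ)*u/n)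
        + SZ.det ^ ((1:ℝ)/n) / (SX+SZ).det ^ ((1:ℝ)/n)) :
    SX.det ^ ((1:ℝ)/n) + SZ.det ^ ((1:ℝ)/n) ≤ (SX+SZ).det ^ ((1:ℝ)/n) ∧
    u - lam * t ≥ (n:ℝ)/2 *
      (Real.logb 2 (SX.det ^ ((1:ℝ)/n) * (lam-1) / SZ.det ^ ((1:ℝ)/n))
        - lam * Real.logb 2
            ((SX+SZ).det ^ ((1:ℝ)/n) * (lam-1) / (SZ.det ^ ((1:ℝ)/n) * lam))) := by
  have hn0 : (0:ℝ) < (n:ℝ) := Nat.cast_pos.mpr hn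
  have hdx : (0:ℝ) < SX.det ^ ((1:ℝ)/n) := Real.rpow_pos_of_pos hX.det_pos _
  have hdz : (0:ℝ) < SZ.det ^ ((1:ℝ)/n) := Real.rpow_pos_of_pos hZ.det_pos _
  have hds : (0:ℝ) < (SX+SZ).det ^ ((1:ℝ)/n) :=
    Real.rpow_pos_of_pos (hX.add hZ).det_pos _
  set dx := SX.det ^ ((1:ℝ)/n)
  set dz := SZ.det ^ ((1:ℝ)/n)
  set ds := (SX+SZ).det ^ ((1:ℝ)/n)
  have hlam1 : 1 < lam := by
    have hdet : (0:ℝ) < (SX⁻¹ * SZ).det := by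
      rw [Matrix.det_mul]
      exact mul_pos hX.inv.det_pos hZ.det_pos
    have := Real.rpow_pos_of_pos hdet ((1:ℝ)/n)
    linarith
  have hm : (0:ℝ) < lam - 1 := by linarith
  have hlam0 : (0:ℝ) < lam := by linarith
  refine ⟨minkowski_det hn hX hZ, ?_⟩
  set X := (2:ℝ) ^ (-(2:ℝ)*u/n) with hXdef
  set Y := (2:ℝ) ^ (-(2:ℝ)*t/n) with hYdef
  have hXpos : 0 < X := Real.rpow_pos_of_pos (by norm_num) _
  have hYpos : 0 < Y := Real.rpow_pos_of_pos (by norm_num) _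
  have hlogX : Real.log X = (-(2:ℝ)*u/n) * Real.log 2 := Real.log_rpow (by norm_num) _
  have hlogY : Real.log Y = (-(2:ℝ)*t/n) * Real.log 2 := Real.log_rpow (by norm_num) _
  set a1 := dx / ds with ha1
  set a2 := dz / ds with ha2
  have ha1p : 0 < a1 := div_pos hdx hds
  have ha2p : 0 < a2 := div_pos hdz hds
  have hkey := key_log ha1p ha2p hlam1 hXpos
  have hsum : 0 < a1 * X + a2 := by positivity
  have hYge : a1 * X + a2 ≤ Y := h
  have hlogYge : Real.log (a1 * X + a2) ≤ Real.log Y := Real.log_le_log hsum hYge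
  have hchain : Real.log (a1 * (lam - 1) / a2) + lam * Real.log (a2 * lam / (lam - 1))
      ≤ lam * Real.log Y - Real.log X := by
    have := mul_le_mul_of_nonneg_left hlogYge hlam0.le
    linarith
  -- identify the log expressions with the goal's
  have e5 : a1 * (lam - 1) / a2 = dx * (lam - 1) / dz := by
    rw [ha1, ha2]; field_simp
  have e6 : a2 * lam / (lam - 1) = (ds * (lam - 1) / (dz * lam))⁻¹ := by
    rw [ha2]; field_simp
  have e7 : Real.log (a2 * lam / (lam - 1))
      = - Real.log (ds * (lam - 1) / (dz * lam)) := by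
    rw [e6, Real.log_inv]
  have hL2 : (0:ℝ) < Real.log 2 := Real.log_pos (by norm_num)
  rw [ge_iff_le, Real.logb, Real.logb]
  have hfinal : Real.log (dx * (lam - 1) / dz) - lam * Real.log (ds * (lam - 1) / (dz * lam))
      ≤ (2 * Real.log 2 / n) * (u - lam * t) := by
    have : Real.log (dx * (lam - 1) / dz) - lam * Real.log (ds * (lam - 1) / (dz * lam))
        = Real.log (a1 * (lam - 1) / a2) + lam * Real.log (a2 * lam / (lam - 1)) := by
      rw [e5, e7]; ring
    rw [this]
    calc _ ≤ lam * Real.log Y - Real.log X := hchain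
      _ = (2 * Real.log 2 / n) * (u - lam * t) := by
          rw [hlogX, hlogY]; field_simp; ring
  calc (n:ℝ)/2 * (Real.log (dx * (lam-1) / dz) / Real.log 2
        - lam * (Real.log (ds * (lam-1) / (dz * lam)) / Real.log 2))
      = (n:ℝ)/(2 * Real.log 2) * (Real.log (dx * (lam-1) / dz)
          - lam * Real.log (ds * (lam-1) / (dz * lam))) := by
        field_simp
    _ ≤ (n:ℝ)/(2 * Real.log 2) * ((2 * Real.log 2 / n) * (u - lam * t)) := by
        apply mul_le_mul_of_nonneg_left hfinal (by positivity)
    _ = u - lam * t := by field_simp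
end
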